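/- If a k-Visits instance (for some k ≥ 1) has no feasible schedule, then the same deadline sequence has no feasible schedule for k'-Visits for any k' > k, and has no feasible infinite Pinwheel schedule. -/

import Mathlib

/-- A feasible schedule for the k-Visits problem with `n` tasks and deadlines `d`:
`f` gives the task visited at each position in `[1, n*k]`, each task `i < n` is visited
exactly `k` times, and every occurrence of `i` is at most `d i` positions after the
previous occurrence of `i` (or after position `0` if it is the first occurrence). -/
def KVFeasible (n k : ℕ) (d : ℕ → ℕ) (f : ℕ → ℕ) : Prop :=
  (∀ p, 1 ≤ p → p ≤ n * k → f p < n) ∧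
  (∀ i < n, ((Finset.Icc 1 (n * k)).filter fun p => f p = i).card = k) ∧
  (∀ i < n, ∀ p, 1 ≤ p → p ≤ n * k → f p = i →
    p ≤ d i ∨ ∃ q, 1 ≤ q ∧ q < p ∧ f q = i ∧ p ≤ q + d i)


/-- number of occurrences of task `i` in positions `[1, p]` of schedule `g`. -/
def cntg (g : ℕ → ℕ) (i p : ℕ) : ℕ := ((Finset.Icc 1 p).filter fun q => g q = i).card

lemma cntg_mono (g : ℕ → ℕ) (i : ℕ) : Monotone (cntg g i) := by
  intro a b hab
  exact Finset.card_le_card (Finset.filter_subset_filter _ (Finset.Icc_subset_Icc_right hab))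

lemma cntg_zero (g : ℕ → ℕ) (i : ℕ) : cntg g i 0 = 0 := by
  simp [cntg]

lemma icc_insert (p : ℕ) (hp : 1 ≤ p) :
    Finset.Icc 1 p = insert p (Finset.Icc 1 (p - 1)) := by
  ext q; simp only [Finset.mem_Icc, Finset.mem_insert]; omega

lemma cntg_succ_eq (g : ℕ → ℕ) (i p : ℕ) (hp : 1 ≤ p) (h : g p = i) :
    cntg g i p = cntg g i (p - 1) + 1 := by
  unfold cntg
  rw [icc_insert p hp, Finset.filter_insert, if_pos h, Finset.card_insert_of_notMem]
  simp only [Finset.mem_filter, Finset.mem_Icc]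
  omega

lemma cntg_succ_ne (g : ℕ → ℕ) (i p : ℕ) (hp : 1 ≤ p) (h : g p ≠ i) :
    cntg g i p = cntg g i (p - 1) := by
  unfold cntg
  rw [icc_insert p hp, Finset.filter_insert, if_neg h]

lemma cntg_step (g : ℕ → ℕ) (i p : ℕ) (hp : 1 ≤ p) :
    cntg g i p ≤ cntg g i (p - 1) + 1 := by
  by_cases h : g p = i
  · rw [cntg_succ_eq g i p hp h]
  · rw [cntg_succ_ne g i p hp h]; omega

lemma cntg_pos (g : ℕ → ℕ) (i p : ℕ) (hp : 1 ≤ p) (h : g p = i) :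
    1 ≤ cntg g i p := by
  rw [cntg_succ_eq g i p hp h]; omega

lemma cntg_lt (g : ℕ → ℕ) (i q p : ℕ) (hqp : q < p) (h : g p = i) :
    cntg g i q < cntg g i p := by
  have h1 : cntg g i q ≤ cntg g i (p - 1) := cntg_mono g i (by omega)
  rw [cntg_succ_eq g i p (by omega) h]; omega

lemma cntg_ivt (g : ℕ → ℕ) (i j B : ℕ) (hj : 1 ≤ j) (hB : j ≤ cntg g i B) :
    ∃ p, 1 ≤ p ∧ p ≤ B ∧ g p = i ∧ cntg g i p = j := by
  have hex : ∃ p, j ≤ cntg g i p := ⟨B, hB⟩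
  set p := Nat.find hex with hpdef
  have hp : j ≤ cntg g i p := Nat.find_spec hex
  have hpB : p ≤ B := Nat.find_min' hex hB
  have hp0 : 1 ≤ p := by
    rcases Nat.eq_zero_or_pos p with h0 | h0
    · rw [h0, cntg_zero] at hp; omega
    · exact h0
  have hprev : ¬ j ≤ cntg g i (p - 1) := Nat.find_min hex (by omega)
  have hstep := cntg_step g i p hp0
  have hgp : g p = i := by
    by_contra hne
    rw [cntg_succ_ne g i p hp0 hne] at hp; omega
  exact ⟨p, hp0, hpB, hgp, by omega⟩

lemma strictMono_fin_add {N : ℕ} (u : Fin N → ℕ) (hu : StrictMono u) :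
    ∀ (m : ℕ) (a b : Fin N), a.val + m = b.val → u a + m ≤ u b := by
  intro m
  induction m with
  | zero =>
    intro a b hab
    have hab' : a = b := Fin.ext (by omega)
    rw [hab']
    omega
  | succ m ih =>
    intro a b hab
    have hm : a.val + m < N := by omega
    have h1 := ih a ⟨a.val + m, hm⟩ rfl
    have h2 : u ⟨a.val + m, hm⟩ < u b := hu (by simp [Fin.lt_def]; omega)
    omega

lemma key (n k B : ℕ) (d g : ℕ → ℕ)
    (hg : ∀ p, 1 ≤ p → p ≤ B → g p < n)
    (hcount : ∀ i < n, k ≤ cntg g i B)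
    (hgap : ∀ i < n, ∀ p, 1 ≤ p → p ≤ B → g p = i →
      p ≤ d i ∨ ∃ q, 1 ≤ q ∧ q < p ∧ g q = i ∧ p ≤ q + d i) :
    ∃ f, KVFeasible n k d f := by
  classical
  set S : Finset ℕ := (Finset.Icc 1 B).filter (fun p => cntg g (g p) p ≤ k) with hSdef
  have hSmem : ∀ p, p ∈ S ↔ (1 ≤ p ∧ p ≤ B ∧ cntg g (g p) p ≤ k) := by
    intro p
    simp only [hSdef, Finset.mem_filter, Finset.mem_Icc]
    tauto
  -- each fiber of S has exactly k elements
  have hfiber : ∀ i < n, (S.filter fun p => g p = i).card = k := by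
    intro i hi
    have : (S.filter fun p => g p = i).card = (Finset.Icc 1 k).card := by
      apply Finset.card_bij (fun p _ => cntg g i p)
      · intro p hp
        simp only [Finset.mem_filter] at hp
        obtain ⟨hpS, hgp⟩ := hp
        rw [hSmem] at hpS
        rw [Finset.mem_Icc]
        refine ⟨cntg_pos g i p hpS.1 hgp, ?_⟩
        have := hpS.2.2
        rwa [hgp] at this
      · intro p₁ hp₁ p₂ hp₂ heq
        simp only [Finset.mem_filter] at hp₁ hp₂
        by_contra hne
        rcases lt_trichotomy p₁ p₂ with hlt | heq2 | hlt
        · have := cntg_lt g i p₁ p₂ hlt hp₂.2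
          omega
        · exact hne heq2
        · have := cntg_lt g i p₂ p₁ hlt hp₁.2
          omega
      · intro j hj
        rw [Finset.mem_Icc] at hj
        obtain ⟨p, hp1, hpB, hgp, hcnt⟩ :=
          cntg_ivt g i j B hj.1 (le_trans hj.2 (hcount i hi))
        refine ⟨p, ?_, hcnt⟩
        simp only [Finset.mem_filter]
        refine ⟨?_, hgp⟩
        rw [hSmem]
        exact ⟨hp1, hpB, by rw [hgp]; omega⟩
    rw [this, Nat.card_Icc]
    omega
  have hScard : S.card = n * k := by
    have h1 : S.card = ∑ i ∈ Finset.range n, (S.filter fun p => g p = i).card := by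
      apply Finset.card_eq_sum_card_fiberwise
      intro p hp
      rw [Finset.mem_coe, hSmem] at hp
      rw [Finset.mem_coe, Finset.mem_range]
      exact hg p hp.1 hp.2.1
    rw [h1]
    rw [Finset.sum_congr rfl (fun i hi => hfiber i (Finset.mem_range.mp hi))]
    simp [mul_comm]
  set e := S.orderIsoOfFin hScard with hedef
  set u : Fin (n * k) → ℕ := fun j => (e j : ℕ) with hudef
  have humem : ∀ j, u j ∈ S := fun j => (e j).2
  have humono : StrictMono u := fun a b hab => Subtype.coe_lt_coe.mpr (e.strictMono hab)
  have hulo : ∀ j : Fin (n * k), j.val + 1 ≤ u j := by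
    intro j
    have h0 : (0 : ℕ) < n * k := lt_of_le_of_lt (Nat.zero_le _) j.2
    have := strictMono_fin_add u humono j.val ⟨0, h0⟩ j (by simp)
    have h1 : 1 ≤ u ⟨0, h0⟩ := ((hSmem _).mp (humem _)).1
    omega
  set F : ℕ → ℕ := fun p => if h : p - 1 < n * k then g (u ⟨p - 1, h⟩) else 0 with hFdef
  have hF : ∀ p (hlt : p - 1 < n * k), F p = g (u ⟨p - 1, hlt⟩) := by
    intro p hlt
    simp only [hFdef]
    rw [dif_pos hlt]
  refine ⟨F, ?_, ?_, ?_⟩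
  · intro p hp1 hp2
    have hlt : p - 1 < n * k := by omega
    rw [hF p hlt]
    have := (hSmem _).mp (humem ⟨p - 1, hlt⟩)
    exact hg _ this.1 this.2.1
  · intro i hi
    have hbij : ((Finset.Icc 1 (n * k)).filter fun p => F p = i).card
        = (S.filter fun p => g p = i).card := by
      apply Finset.card_bij (fun p hp => u ⟨p - 1, by
        have h1 := Finset.mem_filter.mp hp
        have h2 := Finset.mem_Icc.mp h1.1
        omega⟩)
      · intro p hp
        have h1 := Finset.mem_filter.mp hp
        have h2 := Finset.mem_Icc.mp h1.1
        have hlt : p - 1 < n * k := by omega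
        rw [Finset.mem_filter]
        exact ⟨humem _, by rw [← hF p hlt]; exact h1.2⟩
      · intro p₁ hp₁ p₂ hp₂ heq
        have h1 := Finset.mem_Icc.mp (Finset.mem_filter.mp hp₁).1
        have h2 := Finset.mem_Icc.mp (Finset.mem_filter.mp hp₂).1
        have := humono.injective heq
        have := Fin.mk.injEq (p₁ - 1) _ (p₂ - 1) _ ▸ this
        omega
      · intro s hs
        have hsS := (Finset.mem_filter.mp hs).1
        have hgs := (Finset.mem_filter.mp hs).2
        set j : Fin (n * k) := e.symm ⟨s, hsS⟩ with hjdef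
        have huj : u j = s := by
          simp only [hudef, hjdef, OrderIso.apply_symm_apply]
        have hlt : j.val + 1 - 1 < n * k := by
          have := j.2; omega
        refine ⟨j.val + 1, ?_, ?_⟩
        · rw [Finset.mem_filter, Finset.mem_Icc]
          refine ⟨⟨by omega, by have := j.2; omega⟩, ?_⟩
          rw [hF _ hlt]
          have : (⟨j.val + 1 - 1, hlt⟩ : Fin (n * k)) = j := Fin.ext (by simp)
          rw [this, huj]
          exact hgs
        · have : (⟨j.val + 1 - 1, hlt⟩ : Fin (n * k)) = j := Fin.ext (by simp)
          rw [this, huj]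
    rw [hbij]
    exact hfiber i hi
  · intro i hi p hp1 hp2 hfp
    have hlt : p - 1 < n * k := by omega
    have hgs : g (u ⟨p - 1, hlt⟩) = i := by rw [← hF p hlt]; exact hfp
    set s := u ⟨p - 1, hlt⟩ with hsdef
    have hsS := (hSmem s).mp (humem _)
    rcases hgap i hi s hsS.1 hsS.2.1 hgs with hcase | ⟨q, hq1, hqs, hgq, hle⟩
    · left
      have := hulo ⟨p - 1, hlt⟩
      simp only [← hsdef] at this
      omega
    · right
      have hqS : q ∈ S := by
        rw [hSmem]
        refine ⟨hq1, by omega, ?_⟩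
        rw [hgq]
        have h1 : cntg g i q < cntg g i s := cntg_lt g i q s hqs hgs
        have h2 : cntg g i s ≤ k := by
          have := hsS.2.2; rwa [hgs] at this
        omega
      obtain ⟨m, hm⟩ : ∃ m, u m = q := by
        obtain ⟨m, hm⟩ := e.surjective ⟨q, hqS⟩
        exact ⟨m, by simp [hudef, hm]⟩
      have hmlt : m < (⟨p - 1, hlt⟩ : Fin (n * k)) := by
        apply humono.lt_iff_lt.mp
        rw [hm, ← hsdef]
        exact hqs
      have hmval : m.val < p - 1 := hmlt
      refine ⟨m.val + 1, by omega, by omega, ?_, ?_⟩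
      · have hlt2 : m.val + 1 - 1 < n * k := m.2.trans_le' (by omega)
        rw [hF _ hlt2]
        have : (⟨m.val + 1 - 1, hlt2⟩ : Fin (n * k)) = m := Fin.ext (by simp)
        rw [this, hm, hgq]
      · have := strictMono_fin_add u humono ((p - 1) - m.val) m ⟨p - 1, hlt⟩
          (by show m.val + ((p - 1) - m.val) = p - 1; omega)
        rw [hm, ← hsdef] at this
        omega

theorem stmt_18 (n k : ℕ) (d : ℕ → ℕ) (hk : 1 ≤ k) (hpos : ∀ i < n, 0 < d i)
    (h : ¬ ∃ f : ℕ → ℕ, KVFeasible n k d f) :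
    (∀ k', k < k' → ¬ ∃ f : ℕ → ℕ, KVFeasible n k' d f) ∧
    ¬ ∃ g : ℕ → ℕ, (∀ p, 1 ≤ p → g p < n) ∧
      (∀ i < n, ∀ t : ℕ, ∃ q, t < q ∧ q ≤ t + d i ∧ g q = i) := by
  constructor
  · intro k' hk' hex
    obtain ⟨f, hf⟩ := hex
    apply h
    apply key n k (n * k') d f hf.1 ?_ hf.2.2
    intro i hi
    have : cntg f i (n * k') = k' := hf.2.1 i hi
    omega
  · intro hex
    obtain ⟨g, hg1, hg2⟩ := hex
    by_cases hn : n = 0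
    · subst hn
      apply h
      refine ⟨fun _ => 0, ?_, ?_, ?_⟩
      · intro p h1 h2; omega
      · intro i hi; exact absurd hi (Nat.not_lt_zero i)
      · intro i hi; exact absurd hi (Nat.not_lt_zero i)
    · set D := (Finset.range n).sup d with hD
      apply h
      apply key n k (k * D) d g
      · exact fun p hp _ => hg1 p hp
      · intro i hi
        have hstep : ∀ j : ℕ, j ≤ cntg g i (j * d i) := by
          intro j
          induction j with
          | zero => exact Nat.zero_le _
          | succ j ih =>
            obtain ⟨q, hq1, hq2, hq3⟩ := hg2 i hi (j * d i)
            have h1 : cntg g i q = cntg g i (q - 1) + 1 := cntg_succ_eq g i q (by omega) hq3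
            have h2 : cntg g i (j * d i) ≤ cntg g i (q - 1) := cntg_mono g i (by omega)
            have h3 : cntg g i q ≤ cntg g i ((j + 1) * d i) :=
              cntg_mono g i (by rw [add_mul]; omega)
            omega
        have hd : d i ≤ D := Finset.le_sup (Finset.mem_range.mpr hi)
        have h4 : cntg g i (k * d i) ≤ cntg g i (k * D) :=
          cntg_mono g i (Nat.mul_le_mul_left k hd)
        have := hstep k
        omega
      · intro i hi p hp1 hpB hgp
        by_cases hpd : p ≤ d i
        · left; exact hpd
        right
        push_neg at hpd
        have hne : ((Finset.Icc 1 (p - 1)).filter fun q => g q = i).Nonempty := by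
          obtain ⟨q, hq1, hq2, hq3⟩ := hg2 i hi 0
          exact ⟨q, Finset.mem_filter.mpr ⟨Finset.mem_Icc.mpr ⟨by omega, by omega⟩, hq3⟩⟩
        set q0 := Finset.max' _ hne with hq0def
        have hq0mem := Finset.max'_mem _ hne
        have hq0 := Finset.mem_filter.mp hq0mem
        have hq0I := Finset.mem_Icc.mp hq0.1
        obtain ⟨r, hr1, hr2, hr3⟩ := hg2 i hi q0
        have hrp : p ≤ r := by
          by_contra hc
          push_neg at hc
          have hrm : r ∈ (Finset.Icc 1 (p - 1)).filter fun q => g q = i :=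
            Finset.mem_filter.mpr ⟨Finset.mem_Icc.mpr ⟨by omega, by omega⟩, hr3⟩
          have := Finset.le_max' _ r hrm
          omega
        exact ⟨q0, by omega, by omega, hq0.2, by omega⟩
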